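/- For the truncated-Gaussian smoothed function c^β(x) = E_u[c(x+βu)] with u ~ TN(0, I, (b_ℓ-x)/β, (b_u-x)/β), the partial derivative satisfies ∂c^β/∂x_j (x) = E_u[ ((u_j - μ_j)/β) c(x + βu) ], where μ_j = (φ((b_{ℓ,j}-x_j)/β) - φ((b_{u,j}-x_j)/β)) / (Φ((b_{u,j}-x_j)/β) - Φ((b_{ℓ,j}-x_j)/β)) is the mean of the j-th truncated component. -/

import Mathlib

open MeasureTheory Real ENNReal NNReal

/-- Standard normal probability density function. -/
noncomputable def stdNormalPDF (t : ℝ) : ℝ :=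
  (Real.sqrt (2 * Real.pi))⁻¹ * Real.exp (-(t ^ 2) / 2)

/-- Standard normal cumulative distribution function. -/
noncomputable def stdNormalCDF (t : ℝ) : ℝ :=
  ∫ s in Set.Iic t, stdNormalPDF s

/-- Density of a standard Gaussian truncated to `[a, b]`. -/
noncomputable def truncPDF (a b t : ℝ) : ℝ :=
  if t ∈ Set.Icc a b then stdNormalPDF t / (stdNormalCDF b - stdNormalCDF a) else 0

/-- Law of a random vector with independent components, the `i`-th being
a standard Gaussian truncated to `[a i, b i]`. -/
noncomputable def truncGaussianPi {n : ℕ} (a b : Fin n → ℝ) :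
    Measure (Fin n → ℝ) :=
  volume.withDensity fun u => ENNReal.ofReal (∏ i, truncPDF (a i) (b i) (u i))

/-- Euclidean norm on `Fin n → ℝ`. -/
noncomputable def euclNorm {n : ℕ} (x : Fin n → ℝ) : ℝ :=
  Real.sqrt (∑ i, (x i) ^ 2)

/-- Mean of the `j`-th component of the truncated Gaussian vector
`TN(0, I, (bℓ-x)/β, (bu-x)/β)`. -/
noncomputable def truncMean (a b : ℝ) : ℝ :=
  (stdNormalPDF a - stdNormalPDF b) / (stdNormalCDF b - stdNormalCDF a)

/-! ### One-dimensional auxiliary lemmas -/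

lemma stdNormalPDF_pos (t : ℝ) : 0 < stdNormalPDF t := by
  unfold stdNormalPDF; positivity

lemma continuous_stdNormalPDF : Continuous stdNormalPDF := by
  unfold stdNormalPDF; fun_prop

lemma integrable_stdNormalPDF : Integrable stdNormalPDF := by
  have h : Integrable (fun t : ℝ => Real.exp (-(1/2 : ℝ) * t ^ 2)) :=
    integrable_exp_neg_mul_sq (by norm_num)
  have := h.const_mul (Real.sqrt (2 * Real.pi))⁻¹
  refine this.congr (Filter.Eventually.of_forall fun t => ?_)
  unfold stdNormalPDF; ring_nf

lemma hasDerivAt_stdNormalPDF (t : ℝ) :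
    HasDerivAt stdNormalPDF (-t * stdNormalPDF t) t := by
  unfold stdNormalPDF
  have h : HasDerivAt (fun s : ℝ => -(s ^ 2) / 2) (-t) t := by
    have := ((hasDerivAt_pow 2 t).neg).div_const 2
    refine this.congr_deriv ?_
    simp; ring
  have := (h.exp).const_mul (Real.sqrt (2 * Real.pi))⁻¹
  refine this.congr_deriv ?_
  ring

lemma hasDerivAt_stdNormalCDF (t : ℝ) :
    HasDerivAt stdNormalCDF (stdNormalPDF t) t := by
  have key : (fun s : ℝ => stdNormalCDF 0 + ∫ u in (0:ℝ)..s, stdNormalPDF u) = stdNormalCDF := by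
    funext s
    have h := intervalIntegral.integral_Iic_sub_Iic
      (integrable_stdNormalPDF.integrableOn) (integrable_stdNormalPDF.integrableOn)
      (μ := volume) (a := (0:ℝ)) (b := s)
    unfold stdNormalCDF
    linarith [h]
  have hd : HasDerivAt (fun s : ℝ => stdNormalCDF 0 + ∫ u in (0:ℝ)..s, stdNormalPDF u)
      (stdNormalPDF t) t := by
    refine (intervalIntegral.integral_hasDerivAt_right
      (integrable_stdNormalPDF.intervalIntegrable)
      (continuous_stdNormalPDF.stronglyMeasurableAtFilter _ _)
      continuous_stdNormalPDF.continuousAt).const_add _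
  rwa [key] at hd

lemma continuous_stdNormalCDF : Continuous stdNormalCDF :=
  continuous_iff_continuousAt.2 fun s => (hasDerivAt_stdNormalCDF s).continuousAt

lemma stdNormalCDF_lt {a b : ℝ} (h : a < b) : stdNormalCDF a < stdNormalCDF b := by
  have h2 := intervalIntegral.integral_Iic_sub_Iic
      (integrable_stdNormalPDF.integrableOn) (integrable_stdNormalPDF.integrableOn)
      (μ := volume) (a := a) (b := b)
  have h3 : 0 < ∫ u in a..b, stdNormalPDF u :=
    intervalIntegral.intervalIntegral_pos_of_pos
      (integrable_stdNormalPDF.intervalIntegrable) (fun t => stdNormalPDF_pos t) h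
  unfold stdNormalCDF
  linarith

/-! ### The one-dimensional kernel and its derivative -/

/-- Normalization constant. -/
noncomputable def zK (β p q s : ℝ) : ℝ :=
  stdNormalCDF ((q - s)/β) - stdNormalCDF ((p - s)/β)

/-- One-dimensional kernel. -/
noncomputable def gK (β p q s t : ℝ) : ℝ := stdNormalPDF ((t - s)/β) / zK β p q s

/-- Derivative in `s` of the one-dimensional kernel. -/
noncomputable def dgK (β p q s t : ℝ) : ℝ :=
  gK β p q s t * (((t - s)/β - truncMean ((p - s)/β) ((q - s)/β))/β)

lemma zK_pos {β p q : ℝ} (hβ : 0 < β) (hpq : p < q) (s : ℝ) : 0 < zK β p q s := by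
  have : (p - s)/β < (q - s)/β := by gcongr
  simpa [zK, sub_pos] using stdNormalCDF_lt this

lemma continuous_zK {β p q : ℝ} (hβ : 0 < β) :
    Continuous fun s => zK β p q s := by
  have hb : β ≠ 0 := hβ.ne'
  unfold zK
  have := continuous_stdNormalCDF
  fun_prop

lemma gK_pos {β p q : ℝ} (hβ : 0 < β) (hpq : p < q) (s t : ℝ) : 0 < gK β p q s t :=
  div_pos (stdNormalPDF_pos _) (zK_pos hβ hpq s)

lemma continuous_gK2 {β p q : ℝ} (hβ : 0 < β) (hpq : p < q) :
    Continuous fun st : ℝ × ℝ => gK β p q st.1 st.2 := by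
  have hb : β ≠ 0 := hβ.ne'
  apply Continuous.div
  · exact continuous_stdNormalPDF.comp (by fun_prop)
  · exact (continuous_zK hβ).comp continuous_fst
  · exact fun st => (zK_pos hβ hpq st.1).ne'

lemma continuous_truncMean_comp {β p q : ℝ} (hβ : 0 < β) (hpq : p < q) :
    Continuous fun s => truncMean ((p - s)/β) ((q - s)/β) := by
  have hb : β ≠ 0 := hβ.ne'
  have heq : (fun s => truncMean ((p - s)/β) ((q - s)/β)) =
      fun s => (stdNormalPDF ((p - s)/β) - stdNormalPDF ((q - s)/β)) / zK β p q s := by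
    funext s; rfl
  rw [heq]
  apply Continuous.div
  · exact ((continuous_stdNormalPDF.comp (by fun_prop)).sub
      (continuous_stdNormalPDF.comp (by fun_prop)))
  · exact continuous_zK hβ
  · exact fun s => (zK_pos hβ hpq s).ne'

lemma continuous_dgK2 {β p q : ℝ} (hβ : 0 < β) (hpq : p < q) :
    Continuous fun st : ℝ × ℝ => dgK β p q st.1 st.2 := by
  have hb : β ≠ 0 := hβ.ne'
  unfold dgK
  apply (continuous_gK2 hβ hpq).mul
  apply Continuous.div_const
  apply Continuous.sub
  · fun_prop
  · exact ((continuous_truncMean_comp hβ hpq).comp continuous_fst)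

lemma hasDerivAt_inner (β r : ℝ) (s : ℝ) :
    HasDerivAt (fun s : ℝ => (r - s)/β) (-β⁻¹) s := by
  have := ((hasDerivAt_id s).const_sub r).div_const β
  refine this.congr_deriv ?_
  simp [neg_div]

lemma hasDerivAt_zK (β p q : ℝ) (s : ℝ) :
    HasDerivAt (fun s => zK β p q s)
      ((stdNormalPDF ((p - s)/β) - stdNormalPDF ((q - s)/β)) / β) s := by
  have h1 := (hasDerivAt_stdNormalCDF ((q - s)/β)).comp s (hasDerivAt_inner β q s)
  have h2 := (hasDerivAt_stdNormalCDF ((p - s)/β)).comp s (hasDerivAt_inner β p s)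
  have := h1.sub h2
  refine this.congr_deriv ?_
  field_simp
  ring

lemma hasDerivAt_gK {β p q : ℝ} (hβ : 0 < β) (hpq : p < q) (s t : ℝ) :
    HasDerivAt (fun s => gK β p q s t) (dgK β p q s t) s := by
  have hN : HasDerivAt (fun s => stdNormalPDF ((t - s)/β))
      ((-((t - s)/β) * stdNormalPDF ((t - s)/β)) * (-β⁻¹)) s :=
    HasDerivAt.comp (h₂ := stdNormalPDF) s (hasDerivAt_stdNormalPDF ((t - s)/β)) (hasDerivAt_inner β t s)
  have hZ := hasDerivAt_zK β p q s
  have hz := (zK_pos hβ hpq s).ne'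
  have := hN.div hZ hz
  refine this.congr_deriv ?_
  unfold dgK gK truncMean zK at *
  field_simp

/-- `truncPDF` at rescaled arguments. -/
lemma truncPDF_eq {β : ℝ} (hβ : 0 < β) (p q s t : ℝ) :
    truncPDF ((p - s)/β) ((q - s)/β) ((t - s)/β) =
      if t ∈ Set.Icc p q then gK β p q s t else 0 := by
  have hmem : (t - s)/β ∈ Set.Icc ((p - s)/β) ((q - s)/β) ↔ t ∈ Set.Icc p q := by
    simp only [Set.mem_Icc, div_le_div_iff_of_pos_right hβ, sub_le_sub_iff_right]
  unfold truncPDF gK zK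
  rw [if_congr hmem rfl rfl]

lemma measurable_truncPDF (a b : ℝ) : Measurable (truncPDF a b) := by
  unfold truncPDF
  exact Measurable.ite measurableSet_Icc
    ((continuous_stdNormalPDF.measurable).div_const _) measurable_const

/-! ### The n-dimensional kernel -/

/-- Product kernel. -/
noncomputable def PP {n : ℕ} (β : ℝ) (bl bu : Fin n → ℝ) (y v : Fin n → ℝ) : ℝ :=
  ∏ i, gK β (bl i) (bu i) (y i) (v i)

/-- Fréchet derivative in `y` of the product kernel. -/
noncomputable def PP' {n : ℕ} (β : ℝ) (bl bu : Fin n → ℝ) (y v : Fin n → ℝ) :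
    (Fin n → ℝ) →L[ℝ] ℝ :=
  ∑ i, (∏ k ∈ Finset.univ.erase i, gK β (bl k) (bu k) (y k) (v k)) •
    ((dgK β (bl i) (bu i) (y i) (v i)) • ContinuousLinearMap.proj i)

lemma hasFDerivAt_PP {n : ℕ} {β : ℝ} {bl bu : Fin n → ℝ} (hβ : 0 < β)
    (hlu : ∀ i, bl i < bu i) (v y : Fin n → ℝ) :
    HasFDerivAt (fun y => PP β bl bu y v) (PP' β bl bu y v) y := by
  unfold PP PP'
  have key : ∀ i, HasFDerivAt (fun y : Fin n → ℝ => gK β (bl i) (bu i) (y i) (v i))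
      (dgK β (bl i) (bu i) (y i) (v i) • (ContinuousLinearMap.proj i : (Fin n → ℝ) →L[ℝ] ℝ)) y := by
    intro i
    exact (hasDerivAt_gK hβ (hlu i) (y i) (v i)).comp_hasFDerivAt
      (f := fun y : Fin n → ℝ => y i) y
      ((ContinuousLinearMap.proj (R := ℝ) (φ := fun _ : Fin n => ℝ) i).hasFDerivAt)
  exact HasFDerivAt.finset_prod (u := Finset.univ)
    (g := fun i (y : Fin n → ℝ) => gK β (bl i) (bu i) (y i) (v i))
    (g' := fun i => dgK β (bl i) (bu i) (y i) (v i) • ContinuousLinearMap.proj i)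
    (x := y) (fun i _ => key i)

lemma continuous_PP {n : ℕ} {β : ℝ} {bl bu : Fin n → ℝ} (hβ : 0 < β)
    (hlu : ∀ i, bl i < bu i) :
    Continuous fun p : (Fin n → ℝ) × (Fin n → ℝ) => PP β bl bu p.1 p.2 := by
  unfold PP
  apply continuous_finset_prod
  intro i _
  have h := (continuous_gK2 hβ (hlu i)).comp
    (f := fun p : (Fin n → ℝ) × (Fin n → ℝ) => (p.1 i, p.2 i))
    (((continuous_apply i).comp continuous_fst).prodMk ((continuous_apply i).comp continuous_snd))
  exact h

lemma continuous_PP' {n : ℕ} {β : ℝ} {bl bu : Fin n → ℝ} (hβ : 0 < β)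
    (hlu : ∀ i, bl i < bu i) :
    Continuous fun p : (Fin n → ℝ) × (Fin n → ℝ) => PP' β bl bu p.1 p.2 := by
  unfold PP'
  apply continuous_finset_sum
  intro i _
  apply Continuous.fun_smul
  · apply continuous_finset_prod
    intro k _
    have h := (continuous_gK2 hβ (hlu k)).comp
      (f := fun p : (Fin n → ℝ) × (Fin n → ℝ) => (p.1 k, p.2 k))
      (((continuous_apply k).comp continuous_fst).prodMk
        ((continuous_apply k).comp continuous_snd))
    exact h
  · have h := (continuous_dgK2 hβ (hlu i)).comp
      (f := fun p : (Fin n → ℝ) × (Fin n → ℝ) => (p.1 i, p.2 i))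
      (((continuous_apply i).comp continuous_fst).prodMk
        ((continuous_apply i).comp continuous_snd))
    have h2 := h.smul (continuous_const (y := (ContinuousLinearMap.proj i : (Fin n → ℝ) →L[ℝ] ℝ)))
    exact h2

/-! ### Representation of the smoothed integral -/

lemma rep {n : ℕ} {β : ℝ} (hβ : 0 < β) (bl bu : Fin n → ℝ)
    (hlu : ∀ i, bl i < bu i) (c : (Fin n → ℝ) → ℝ) (y : Fin n → ℝ)
    (w : (Fin n → ℝ) → ℝ) :
    ∫ u, w u * c (y + β • u)
        ∂(truncGaussianPi (fun i => (bl i - y i) / β) (fun i => (bu i - y i) / β))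
      = (β^n)⁻¹ * ∫ v in Set.Icc bl bu,
          c v * (w (β⁻¹ • (v - y)) * PP β bl bu y v) := by
  classical
  set r : (Fin n → ℝ) → ℝ :=
    fun u => ∏ i, truncPDF ((bl i - y i) / β) ((bu i - y i) / β) (u i) with hr_def
  have hr_meas : Measurable fun u => (r u).toNNReal := by
    apply Measurable.real_toNNReal
    exact Finset.measurable_prod _ fun i _ =>
      (measurable_truncPDF _ _).comp (measurable_pi_apply i)
  have hr_nonneg : ∀ u, 0 ≤ r u := by
    intro u
    apply Finset.prod_nonneg
    intro i _
    unfold truncPDF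
    split
    · have h1 : (bl i - y i)/β < (bu i - y i)/β := by gcongr; exact hlu i
      have hz := stdNormalCDF_lt h1
      have := stdNormalPDF_pos (u i)
      have : (0:ℝ) < stdNormalCDF ((bu i - y i)/β) - stdNormalCDF ((bl i - y i)/β) := by
        linarith
      positivity
    · exact le_rfl
  -- Step 1: withDensity to weighted integral
  have step1 : ∫ u, w u * c (y + β • u)
        ∂(truncGaussianPi (fun i => (bl i - y i) / β) (fun i => (bu i - y i) / β))
      = ∫ u, r u * (w u * c (y + β • u)) := by
    have hm : truncGaussianPi (fun i => (bl i - y i) / β) (fun i => (bu i - y i) / β)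
        = volume.withDensity fun u => ((r u).toNNReal : ℝ≥0∞) := rfl
    rw [hm, integral_withDensity_eq_integral_smul hr_meas]
    refine integral_congr_ae (Filter.Eventually.of_forall fun u => ?_)
    simp [NNReal.smul_def, Real.coe_toNNReal _ (hr_nonneg u)]
  -- the function after change of variables
  set G : (Fin n → ℝ) → ℝ := fun v =>
    (∏ i, truncPDF ((bl i - y i) / β) ((bu i - y i) / β) ((v i - y i)/β)) *
      (w (β⁻¹ • (v - y)) * c v) with hG_def
  have step2 : (fun u => r u * (w u * c (y + β • u))) = fun u => G (y + β • u) := by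
    funext u
    have h1 : ∀ i, ((y + β • u) i - y i)/β = u i := by
      intro i
      simp only [Pi.add_apply, Pi.smul_apply, smul_eq_mul]
      field_simp
      ring
    have h2 : β⁻¹ • (y + β • u - y) = u := by
      funext i
      simp only [Pi.smul_apply, Pi.sub_apply, Pi.add_apply, smul_eq_mul]
      field_simp
      ring
    simp only [hG_def, h2]
    congr 1
    exact Finset.prod_congr rfl fun i _ => by rw [h1 i]
  -- Step 3: change of variables
  have step3 : ∫ u, G (y + β • u) = (β^n)⁻¹ * ∫ v, G v := by
    have h1 : (fun u => G (y + β • u)) = fun u => (fun z => G (y + z)) (β • u) := rfl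
    rw [h1, Measure.integral_comp_smul volume (fun z => G (y + z)) β]
    rw [integral_add_left_eq_self (μ := volume) (fun z => G z) y]
    have : |(β ^ Module.finrank ℝ (Fin n → ℝ))⁻¹| = (β^n)⁻¹ := by
      rw [Module.finrank_fin_fun]
      rw [abs_of_nonneg (by positivity)]
    rw [this, smul_eq_mul]
  -- Step 4: indicator form
  have step4 : ∫ v, G v = ∫ v in Set.Icc bl bu,
      c v * (w (β⁻¹ • (v - y)) * PP β bl bu y v) := by
    rw [← integral_indicator measurableSet_Icc]
    congr 1
    funext v
    by_cases hv : v ∈ Set.Icc bl bu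
    · have hvi : ∀ i, v i ∈ Set.Icc (bl i) (bu i) := by
        rw [Set.mem_Icc] at hv
        intro i
        exact Set.mem_Icc.2 ⟨hv.1 i, hv.2 i⟩
      rw [Set.indicator_of_mem hv]
      simp only [hG_def]
      have : (∏ i, truncPDF ((bl i - y i) / β) ((bu i - y i) / β) ((v i - y i)/β))
          = PP β bl bu y v := by
        unfold PP
        refine Finset.prod_congr rfl fun i _ => ?_
        rw [truncPDF_eq hβ, if_pos (hvi i)]
      rw [this]; ring
    · rw [Set.indicator_of_notMem hv]
      simp only [hG_def]
      have : ∃ i, v i ∉ Set.Icc (bl i) (bu i) := by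
        by_contra h
        push_neg at h
        exact hv (Set.mem_Icc.2 ⟨fun i => (Set.mem_Icc.1 (h i)).1,
          fun i => (Set.mem_Icc.1 (h i)).2⟩)
      obtain ⟨i, hi⟩ := this
      have : (∏ k, truncPDF ((bl k - y k) / β) ((bu k - y k) / β) ((v k - y k)/β)) = 0 := by
        apply Finset.prod_eq_zero (Finset.mem_univ i)
        rw [truncPDF_eq hβ, if_neg hi]
      rw [this, zero_mul]
  rw [step1, step2, step3, step4]

theorem truncated_gaussian_smoothing_partial_deriv {n : ℕ} (β : ℝ) (hβ : 0 < β)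
    (bl bu : Fin n → ℝ) (c : (Fin n → ℝ) → ℝ)
    (hc : IntegrableOn c (Set.Icc bl bu) volume)
    (x : Fin n → ℝ) (hx : x ∈ interior (Set.Icc bl bu)) (j : Fin n) :
    fderiv ℝ
      (fun y => ∫ u, c (y + β • u)
        ∂(truncGaussianPi (fun i => (bl i - y i) / β) (fun i => (bu i - y i) / β)))
      x (Pi.single j 1)
      = ∫ u, ((u j - truncMean ((bl j - x j) / β) ((bu j - x j) / β)) / β) * c (x + β • u)
          ∂(truncGaussianPi (fun i => (bl i - x i) / β) (fun i => (bu i - x i) / β)) := by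
  classical
  have hxi : ∀ i, bl i < x i ∧ x i < bu i := by
    have hint : interior (Set.Icc bl bu) = Set.pi Set.univ (fun i => Set.Ioo (bl i) (bu i)) := by
      rw [← Set.pi_univ_Icc, interior_pi_set Set.finite_univ]
      simp [interior_Icc]
    rw [hint] at hx
    exact fun i => ⟨(hx i (Set.mem_univ i)).1, (hx i (Set.mem_univ i)).2⟩
  have hlu : ∀ i, bl i < bu i := fun i => (hxi i).1.trans (hxi i).2
  have hfun : (fun y => ∫ u, c (y + β • u)
        ∂(truncGaussianPi (fun i => (bl i - y i) / β) (fun i => (bu i - y i) / β)))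
      = fun y => (β^n)⁻¹ * ∫ v in Set.Icc bl bu, c v * PP β bl bu y v := by
    funext y
    have h := rep hβ bl bu hlu c y (fun _ => 1)
    simpa using h
  -- compact bounds
  obtain ⟨M, hM⟩ := ((isCompact_closedBall x 1).prod
    (isCompact_Icc (a := bl) (b := bu))).exists_bound_of_continuousOn
    ((continuous_PP' hβ hlu).continuousOn)
  have hPPxcont : Continuous fun v => PP β bl bu x v := by
    have h := (continuous_PP hβ hlu).comp
      (f := fun v : Fin n → ℝ => (x, v)) (continuous_const.prodMk continuous_id)
    exact h
  obtain ⟨M₂, hM₂⟩ := (isCompact_Icc (a := bl) (b := bu)).exists_bound_of_continuousOn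
    hPPxcont.continuousOn
  have hcm : AEStronglyMeasurable c (volume.restrict (Set.Icc bl bu)) := hc.aestronglyMeasurable
  have hPPcont : ∀ y : Fin n → ℝ, Continuous fun v => PP β bl bu y v := by
    intro y
    have h := (continuous_PP hβ hlu).comp
      (f := fun v : Fin n → ℝ => (y, v)) (continuous_const.prodMk continuous_id)
    exact h
  have hPP'cont : ∀ y : Fin n → ℝ, Continuous fun v => PP' β bl bu y v := by
    intro y
    have h := (continuous_PP' hβ hlu).comp
      (f := fun v : Fin n → ℝ => (y, v)) (continuous_const.prodMk continuous_id)
    exact h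
  have hF'meas : AEStronglyMeasurable (fun v => c v • PP' β bl bu x v)
      (volume.restrict (Set.Icc bl bu)) :=
    hcm.smul (hPP'cont x).aestronglyMeasurable
  have hboundae : ∀ᵐ v ∂(volume.restrict (Set.Icc bl bu)), ∀ y ∈ Metric.ball x 1,
      ‖c v • PP' β bl bu y v‖ ≤ |M| * ‖c v‖ := by
    filter_upwards [ae_restrict_mem measurableSet_Icc] with v hv y hy
    rw [norm_smul (c v) (PP' β bl bu y v)]
    have h1 : ‖PP' β bl bu y v‖ ≤ M := hM (y, v) ⟨Metric.ball_subset_closedBall hy, hv⟩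
    calc ‖c v‖ * ‖PP' β bl bu y v‖ ≤ ‖c v‖ * |M| := by
          gcongr; exact h1.trans (le_abs_self M)
      _ = |M| * ‖c v‖ := mul_comm _ _
  have key : HasFDerivAt (fun y => ∫ v in Set.Icc bl bu, c v * PP β bl bu y v)
      (∫ v in Set.Icc bl bu, c v • PP' β bl bu x v) x := by
    apply hasFDerivAt_integral_of_dominated_of_fderiv_le (s := Metric.ball x 1) (Metric.ball_mem_nhds x one_pos)
      (F' := fun y v => c v • PP' β bl bu y v) (bound := fun v => |M| * ‖c v‖)
    · exact Filter.Eventually.of_forall fun y =>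
        hcm.mul (hPPcont y).aestronglyMeasurable
    · refine Integrable.mono' (hc.norm.const_mul |M₂|)
        (hcm.mul (hPPcont x).aestronglyMeasurable) ?_
      filter_upwards [ae_restrict_mem measurableSet_Icc] with v hv
      rw [norm_mul]
      calc ‖c v‖ * ‖PP β bl bu x v‖ ≤ ‖c v‖ * |M₂| := by
            gcongr; exact (hM₂ v hv).trans (le_abs_self M₂)
        _ = |M₂| * ‖c v‖ := mul_comm _ _
    · exact hF'meas
    · exact hboundae
    · exact hc.norm.const_mul |M|
    · exact Filter.Eventually.of_forall fun v y hy =>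
        (hasFDerivAt_PP hβ hlu v y).const_mul (c v)
  have key2 : HasFDerivAt (fun y => (β^n)⁻¹ * ∫ v in Set.Icc bl bu, c v * PP β bl bu y v)
      ((β^n)⁻¹ • (∫ v in Set.Icc bl bu, c v • PP' β bl bu x v)) x := key.const_mul _
  rw [hfun, key2.fderiv]
  have hint' : Integrable (fun v => c v • PP' β bl bu x v)
      (volume.restrict (Set.Icc bl bu)) := by
    refine Integrable.mono' (hc.norm.const_mul |M|) hF'meas ?_
    filter_upwards [hboundae] with v hv
    exact hv x (Metric.mem_ball_self one_pos)
  rw [ContinuousLinearMap.smul_apply, ContinuousLinearMap.integral_apply hint' (Pi.single j 1)]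
  rw [rep hβ bl bu hlu c x
    (fun u => (u j - truncMean ((bl j - x j) / β) ((bu j - x j) / β)) / β)]
  rw [smul_eq_mul]
  congr 1
  refine integral_congr_ae (Filter.Eventually.of_forall fun v => ?_)
  simp only [ContinuousLinearMap.smul_apply, smul_eq_mul]
  have hPP'app : PP' β bl bu x v (Pi.single j 1)
      = (∏ k ∈ Finset.univ.erase j, gK β (bl k) (bu k) (x k) (v k)) *
          dgK β (bl j) (bu j) (x j) (v j) := by
    unfold PP'
    rw [ContinuousLinearMap.sum_apply]
    rw [Finset.sum_eq_single j]
    · simp [ContinuousLinearMap.smul_apply, ContinuousLinearMap.proj_apply]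
    · intro i _ hij
      simp [ContinuousLinearMap.smul_apply, ContinuousLinearMap.proj_apply,
        Pi.single_eq_of_ne hij]
    · intro h
      exact absurd (Finset.mem_univ j) h
  rw [hPP'app]
  have hP : PP β bl bu x v = gK β (bl j) (bu j) (x j) (v j) *
      ∏ k ∈ Finset.univ.erase j, gK β (bl k) (bu k) (x k) (v k) :=
    (Finset.mul_prod_erase _ _ (Finset.mem_univ j)).symm
  rw [hP]
  unfold dgK
  have hsmul : (β⁻¹ • (v - x)) j = β⁻¹ * (v j - x j) := by
    simp [Pi.smul_apply, Pi.sub_apply]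
  rw [hsmul]
  have hb : β ≠ 0 := hβ.ne'
  field_simp
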